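/- Let α > 0, β > -1, and for n ≥ 1 set A_n² = ((2n+α+β)/(2n+α+β+1))·((n+α)/(n+α+β)) and B_n² = ((2n+α+β)/(2n+α+β+1))·((n+β)/n). Then the sequences (n+α)/((n+(α+β+1)/2) A_n) and (n+β)/((n+(α+β+1)/2) B_n) are bounded above by an absolute constant independent of n, α and β (for α, β > -1/2, β ≥ 0 respectively as needed for positivity). -/

import Mathlib

open Real

lemma aux_bound (num den t : ℝ) (hnum : 0 < num) (hden : 0 < den)
    (ht : (num / (4 * den)) ^ 2 ≤ t) : num / (den * Real.sqrt t) ≤ 4 := by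
  have hq : 0 < num / (4 * den) := by positivity
  have h1 : num / (4 * den) ≤ Real.sqrt t := (Real.le_sqrt' hq).2 ht
  have hst : 0 < Real.sqrt t := lt_of_lt_of_le hq h1
  rw [div_le_iff₀ (by positivity)]
  calc num = 4 * (den * (num / (4 * den))) := by field_simp
    _ ≤ 4 * (den * Real.sqrt t) := by nlinarith

theorem stmt_19 :
    ∃ C : ℝ, 0 < C ∧ ∀ (n : ℕ) (α β : ℝ), 1 ≤ n → 0 < α → 0 < (n : ℝ) + β →
      ((n : ℝ) + α) / (((n : ℝ) + (α + β + 1)/2) *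
          Real.sqrt (((2*(n:ℝ)+α+β)/(2*(n:ℝ)+α+β+1)) * (((n:ℝ)+α)/((n:ℝ)+α+β)))) ≤ C ∧
      ((n : ℝ) + β) / (((n : ℝ) + (α + β + 1)/2) *
          Real.sqrt (((2*(n:ℝ)+α+β)/(2*(n:ℝ)+α+β+1)) * (((n:ℝ)+β)/(n:ℝ)))) ≤ C := by
  refine ⟨4, by norm_num, fun n α β hn hα hβ => ?_⟩
  have hn1 : (1 : ℝ) ≤ (n : ℝ) := by exact_mod_cast hn
  have hn0 : (0 : ℝ) < (n : ℝ) := lt_of_lt_of_le one_pos hn1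
  have hx : 0 < (n : ℝ) + α := by linarith
  have hm : 0 < (n : ℝ) + α + β := by linarith
  have hs : 0 < 2*(n:ℝ) + α + β := by linarith
  have hs1 : 0 < 2*(n:ℝ) + α + β + 1 := by linarith
  have hD : 0 < (n : ℝ) + (α + β + 1)/2 := by linarith
  constructor
  · apply aux_bound _ _ _ hx hD
    rw [div_pow, div_mul_div_comm, div_le_div_iff₀ (by positivity) (by positivity)]
    have key : ((n:ℝ)+α)*((n:ℝ)+α+β) ≤ (2*(n:ℝ)+α+β)*(2*(n:ℝ)+α+β) := by
      nlinarith [mul_pos hx hβ, sq_nonneg ((n:ℝ)+β), mul_pos hn0 hx]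
    nlinarith [mul_le_mul_of_nonneg_right key (le_of_lt (mul_pos hx hs1)),
      mul_pos (mul_pos hs hx) hs1, mul_pos (mul_pos (mul_pos hs hx) hs1) hs1]
  · apply aux_bound _ _ _ hβ hD
    rw [div_pow, div_mul_div_comm, div_le_div_iff₀ (by positivity) (by positivity)]
    have key : ((n:ℝ)+β)*(n:ℝ) ≤ (2*(n:ℝ)+α+β)*(2*(n:ℝ)+α+β) := by
      nlinarith [mul_pos hn0 hβ, sq_nonneg ((n:ℝ)+α), mul_pos hn0 hx, mul_pos hx hβ]
    nlinarith [mul_le_mul_of_nonneg_right key (le_of_lt (mul_pos hβ hs1)),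
      mul_pos (mul_pos hs hβ) hs1, mul_pos (mul_pos (mul_pos hs hβ) hs1) hs1]
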